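/- Let f : ℝ²ⁿ → ℝ, f(v₊, v₋) = h(v₊⊙v₊ − v₋⊙v₋) + λ(‖v₊‖² + ‖v₋‖²) with h convex and C¹ and λ > 0. If (v₊, v₋) satisfies ∇f(v₊,v₋) = 0 and the Hessian condition that for every index i with (v₊)_i = 0, the second directional derivative of f at (v₊,v₋) along e_i (the unit vector in the (v₊)_i coordinate) is nonnegative, and similarly for v₋, then x := v₊⊙v₊ − v₋⊙v₋ is a global minimizer of h(x) + λ‖x‖₁. -/

import Mathlib

open Filter Topology

section Aux

lemma curve_hasDerivAt {n : ℕ} {h : (Fin n → ℝ) → ℝ} (hC1 : ContDiff ℝ 1 h)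
    (x w : Fin n → ℝ) {s : ℝ → ℝ} {s' : ℝ} {t : ℝ} (hs : HasDerivAt s s' t) :
    HasDerivAt (fun t => h (x + s t • w)) (s' * fderiv ℝ h (x + s t • w) w) t := by
  have hγ : HasDerivAt (fun t => x + s t • w) (s' • w) t :=
    (hs.smul_const w).const_add x
  have hd := ((hC1.differentiable one_ne_zero) (x + s t • w)).hasFDerivAt
  have := hd.comp_hasDerivAt t hγ
  simp only [map_smul] at this
  exact this

lemma sq_hasDerivAt (c t : ℝ) : HasDerivAt (fun t : ℝ => 2*c*t + t^2) (2*c + 2*t) t := by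
  have := ((hasDerivAt_id t).const_mul (2*c)).add (hasDerivAt_pow 2 t)
  refine this.congr_deriv ?_
  norm_num

lemma path_plus {n : ℕ} (vp vm : Fin n → ℝ) (i : Fin n) (t : ℝ) :
    ((vp + t • (Pi.single i 1 : Fin n → ℝ)) * (vp + t • (Pi.single i 1 : Fin n → ℝ)) - vm * vm)
      = (vp * vp - vm * vm) + (2 * vp i * t + t^2) • (Pi.single i 1 : Fin n → ℝ) := by
  funext j
  rcases eq_or_ne j i with rfl | hj
  · simp [Pi.single_apply]; ring
  · simp [Pi.single_apply, hj]

lemma path_minus {n : ℕ} (vp vm : Fin n → ℝ) (i : Fin n) (t : ℝ) :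
    (vp * vp - (vm + t • (Pi.single i 1 : Fin n → ℝ)) * (vm + t • (Pi.single i 1 : Fin n → ℝ)))
      = (vp * vp - vm * vm) + (2 * vm i * t + t^2) • (-(Pi.single i 1 : Fin n → ℝ)) := by
  funext j
  rcases eq_or_ne j i with rfl | hj
  · simp [Pi.single_apply]; ring
  · simp [Pi.single_apply, hj]

lemma sum_sq_plus {n : ℕ} (vp : Fin n → ℝ) (i : Fin n) (t : ℝ) :
    ∑ j, ((vp + t • (Pi.single i 1 : Fin n → ℝ)) j)^2
      = (∑ j, (vp j)^2) + (2 * vp i * t + t^2) := by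
  have key : ∀ j, ((vp + t • (Pi.single i 1 : Fin n → ℝ)) j)^2
      = (vp j)^2 + (if j = i then 2 * vp i * t + t^2 else 0) := by
    intro j
    rcases eq_or_ne j i with rfl | hj
    · simp [Pi.single_apply]; ring
    · simp [Pi.single_apply, hj]
  simp only [key, Finset.sum_add_distrib, Finset.sum_ite_eq' Finset.univ, Finset.mem_univ, if_true]

end Aux

set_option maxHeartbeats 1000000 in
theorem stmt7 {n : ℕ} (h : (Fin n → ℝ) → ℝ)
    (hconv : ConvexOn ℝ Set.univ h) (hC1 : ContDiff ℝ 1 h)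
    (lam : ℝ) (hlam : 0 < lam)
    (f : ((Fin n → ℝ) × (Fin n → ℝ)) → ℝ)
    (hf : ∀ p : (Fin n → ℝ) × (Fin n → ℝ),
      f p = h (p.1 * p.1 - p.2 * p.2) + lam * ((∑ i, (p.1 i) ^ 2) + ∑ i, (p.2 i) ^ 2))
    (vp vm : Fin n → ℝ)
    (hstat : fderiv ℝ f (vp, vm) = 0)
    (hsecp : ∀ i, vp i = 0 →
      0 ≤ deriv (deriv (fun t : ℝ => f (vp + t • (Pi.single i 1 : Fin n → ℝ), vm))) 0)
    (hsecm : ∀ i, vm i = 0 →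
      0 ≤ deriv (deriv (fun t : ℝ => f (vp, vm + t • (Pi.single i 1 : Fin n → ℝ)))) 0) :
    ∀ y : Fin n → ℝ,
      h (vp * vp - vm * vm) + lam * ∑ i, |(vp * vp - vm * vm) i| ≤
        h y + lam * ∑ i, |y i| := by
  intro y
  set x : Fin n → ℝ := vp * vp - vm * vm with hxdef
  set g : (Fin n → ℝ) →L[ℝ] ℝ := fderiv ℝ h x with hgdef
  set S : ℝ := (∑ i, vp i ^ 2) + ∑ i, vm i ^ 2 with hSdef
  have hdiffh := hC1.differentiable one_ne_zero
  -- rewriting f along coordinate paths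
  have hfp : ∀ (i : Fin n) (t : ℝ), f (vp + t • (Pi.single i 1 : Fin n → ℝ), vm)
      = h (x + (2 * vp i * t + t^2) • (Pi.single i 1 : Fin n → ℝ))
        + lam * (S + (2 * vp i * t + t^2)) := by
    intro i t
    rw [hf]
    show h _ + _ = _
    rw [path_plus, sum_sq_plus, ← hxdef]
    congr 1
    rw [hSdef]; ring
  have hfm : ∀ (i : Fin n) (t : ℝ), f (vp, vm + t • (Pi.single i 1 : Fin n → ℝ))
      = h (x + (2 * vm i * t + t^2) • (-(Pi.single i 1 : Fin n → ℝ)))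
        + lam * (S + (2 * vm i * t + t^2)) := by
    intro i t
    rw [hf]
    show h _ + _ = _
    rw [path_minus, sum_sq_plus, ← hxdef]
    congr 1
    rw [hSdef]; ring
  -- f is differentiable
  have hfd : Differentiable ℝ f := by
    have hfe : f = fun p : (Fin n → ℝ) × (Fin n → ℝ) =>
        h (p.1 * p.1 - p.2 * p.2) + lam * ((∑ i, (p.1 i) ^ 2) + ∑ i, (p.2 i) ^ 2) :=
      funext hf
    rw [hfe]
    have hproj1 : ∀ j, Differentiable ℝ (fun p : (Fin n → ℝ) × (Fin n → ℝ) => p.1 j) := by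
      intro j
      exact (differentiable_pi.1 differentiable_fst) j
    have hproj2 : ∀ j, Differentiable ℝ (fun p : (Fin n → ℝ) × (Fin n → ℝ) => p.2 j) := by
      intro j
      exact (differentiable_pi.1 differentiable_snd) j
    apply Differentiable.add
    · apply hdiffh.comp
      apply differentiable_pi.2
      intro j
      simp only [Pi.sub_apply, Pi.mul_apply]
      exact ((hproj1 j).mul (hproj1 j)).sub ((hproj2 j).mul (hproj2 j))
    · apply Differentiable.const_mul
      apply Differentiable.add
      · exact Differentiable.fun_sum fun j _ => (hproj1 j).pow 2
      · exact Differentiable.fun_sum fun j _ => (hproj2 j).pow 2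
  -- first-order conditions
  have hstatp : ∀ i, vp i * (g (Pi.single i 1) + lam) = 0 := by
    intro i
    set e : Fin n → ℝ := Pi.single i 1 with he
    have hpath : HasDerivAt (fun t : ℝ => (vp + t • e, vm)) ((e, (0 : Fin n → ℝ))) 0 := by
      apply HasDerivAt.prodMk
      · simpa using ((hasDerivAt_id (0:ℝ)).smul_const e).const_add vp
      · exact hasDerivAt_const 0 vm
    have h0 : HasDerivAt (fun t : ℝ => f (vp + t • e, vm)) 0 0 := by
      have hfde := (hfd (vp + (0:ℝ) • e, vm)).hasFDerivAt
      have hcomp := hfde.comp_hasDerivAt 0 hpath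
      simp only [zero_smul, add_zero] at hcomp
      rw [hstat] at hcomp
      simp at hcomp
      exact hcomp
    have h1 : HasDerivAt (fun t : ℝ => f (vp + t • e, vm)) (2 * vp i * (g e + lam)) 0 := by
      have heq : (fun t : ℝ => f (vp + t • e, vm))
          = fun t => h (x + (2 * vp i * t + t^2) • e) + lam * (S + (2 * vp i * t + t^2)) :=
        funext (hfp i)
      rw [heq]
      have hc := curve_hasDerivAt hC1 x e (sq_hasDerivAt (vp i) 0)
      have hl : HasDerivAt (fun t : ℝ => lam * (S + (2 * vp i * t + t^2)))
          (lam * (2 * vp i + 2 * 0)) 0 :=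
        ((sq_hasDerivAt (vp i) 0).const_add S).const_mul lam
      have h2 := hc.add hl
      norm_num at h2
      refine h2.congr_deriv ?_
      rw [hgdef]
      ring
    have := h1.unique h0
    linarith
  have hstatm : ∀ i, vm i * (lam - g (Pi.single i 1)) = 0 := by
    intro i
    set e : Fin n → ℝ := Pi.single i 1 with he
    have hpath : HasDerivAt (fun t : ℝ => (vp, vm + t • e)) (((0 : Fin n → ℝ), e)) 0 := by
      apply HasDerivAt.prodMk
      · exact hasDerivAt_const 0 vp
      · simpa using ((hasDerivAt_id (0:ℝ)).smul_const e).const_add vm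
    have h0 : HasDerivAt (fun t : ℝ => f (vp, vm + t • e)) 0 0 := by
      have hfde := (hfd (vp, vm + (0:ℝ) • e)).hasFDerivAt
      have hcomp := hfde.comp_hasDerivAt 0 hpath
      simp only [zero_smul, add_zero] at hcomp
      rw [hstat] at hcomp
      simp at hcomp
      exact hcomp
    have h1 : HasDerivAt (fun t : ℝ => f (vp, vm + t • e)) (2 * vm i * (lam - g e)) 0 := by
      have heq : (fun t : ℝ => f (vp, vm + t • e))
          = fun t => h (x + (2 * vm i * t + t^2) • (-e)) + lam * (S + (2 * vm i * t + t^2)) :=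
        funext (hfm i)
      rw [heq]
      have hc := curve_hasDerivAt hC1 x (-e) (sq_hasDerivAt (vm i) 0)
      have hl : HasDerivAt (fun t : ℝ => lam * (S + (2 * vm i * t + t^2)))
          (lam * (2 * vm i + 2 * 0)) 0 :=
        ((sq_hasDerivAt (vm i) 0).const_add S).const_mul lam
      have h2 := hc.add hl
      norm_num at h2
      refine HasDerivAt.congr_deriv (f' := -(2 * vm i * (fderiv ℝ h x) e) + lam * (2 * vm i)) ?_ ?_
      · simp only [smul_neg]; exact h2
      · rw [hgdef]
        ring
    have := h1.unique h0
    linarith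
  -- second-order conditions
  have hsecp' : ∀ i, vp i = 0 → -lam ≤ g (Pi.single i 1) := by
    intro i hvpi
    have hsec := hsecp i hvpi
    set e : Fin n → ℝ := Pi.single i 1 with he
    set u : ℝ → ℝ := fun τ => fderiv ℝ h (x + (2 * vp i * τ + τ^2) • e) e with hu
    have hderiv : deriv (fun t : ℝ => f (vp + t • e, vm))
        = fun τ => (2 * vp i + 2 * τ) * u τ + lam * (2 * vp i + 2 * τ) := by
      funext τ
      have heq : (fun t : ℝ => f (vp + t • e, vm))
          = fun t => h (x + (2 * vp i * t + t^2) • e) + lam * (S + (2 * vp i * t + t^2)) :=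
        funext (hfp i)
      rw [heq]
      exact ((curve_hasDerivAt hC1 x e (sq_hasDerivAt (vp i) τ)).add
        (((sq_hasDerivAt (vp i) τ).const_add S).const_mul lam)).deriv
    have hucont : ContinuousAt u 0 := by
      apply Continuous.continuousAt
      apply Continuous.clm_apply _ continuous_const
      exact (hC1.continuous_fderiv one_ne_zero).comp (by fun_prop)
    have hdd : HasDerivAt (deriv (fun t : ℝ => f (vp + t • e, vm))) (2 * (u 0 + lam)) 0 := by
      rw [hderiv, hasDerivAt_iff_tendsto_slope]
      have htt : Tendsto (fun τ => 2 * (u τ + lam)) (𝓝[≠] (0:ℝ)) (𝓝 (2 * (u 0 + lam))) := by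
        have : Tendsto (fun τ => 2 * (u τ + lam)) (𝓝 (0:ℝ)) (𝓝 (2 * (u 0 + lam))) :=
          (hucont.tendsto.add tendsto_const_nhds).const_mul 2
        exact this.mono_left nhdsWithin_le_nhds
      apply htt.congr'
      filter_upwards [self_mem_nhdsWithin] with τ hτ
      have hτ' : τ ≠ 0 := hτ
      rw [slope_def_field]
      simp only [hvpi]
      field_simp
      ring
    have hder2 : deriv (deriv (fun t : ℝ => f (vp + t • e, vm))) 0 = 2 * (u 0 + lam) := hdd.deriv
    rw [hder2] at hsec
    have hu0 : u 0 = g e := by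
      rw [hu, hgdef]
      norm_num
    rw [hu0] at hsec
    linarith
  have hsecm' : ∀ i, vm i = 0 → g (Pi.single i 1) ≤ lam := by
    intro i hvmi
    have hsec := hsecm i hvmi
    set e : Fin n → ℝ := Pi.single i 1 with he
    set u : ℝ → ℝ := fun τ => fderiv ℝ h (x + (2 * vm i * τ + τ^2) • (-e)) (-e) with hu
    have hderiv : deriv (fun t : ℝ => f (vp, vm + t • e))
        = fun τ => (2 * vm i + 2 * τ) * u τ + lam * (2 * vm i + 2 * τ) := by
      funext τ
      have heq : (fun t : ℝ => f (vp, vm + t • e))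
          = fun t => h (x + (2 * vm i * t + t^2) • (-e)) + lam * (S + (2 * vm i * t + t^2)) :=
        funext (hfm i)
      rw [heq]
      exact ((curve_hasDerivAt hC1 x (-e) (sq_hasDerivAt (vm i) τ)).add
        (((sq_hasDerivAt (vm i) τ).const_add S).const_mul lam)).deriv
    have hucont : ContinuousAt u 0 := by
      apply Continuous.continuousAt
      apply Continuous.clm_apply _ continuous_const
      exact (hC1.continuous_fderiv one_ne_zero).comp (by fun_prop)
    have hdd : HasDerivAt (deriv (fun t : ℝ => f (vp, vm + t • e))) (2 * (u 0 + lam)) 0 := by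
      rw [hderiv, hasDerivAt_iff_tendsto_slope]
      have htt : Tendsto (fun τ => 2 * (u τ + lam)) (𝓝[≠] (0:ℝ)) (𝓝 (2 * (u 0 + lam))) := by
        have : Tendsto (fun τ => 2 * (u τ + lam)) (𝓝 (0:ℝ)) (𝓝 (2 * (u 0 + lam))) :=
          (hucont.tendsto.add tendsto_const_nhds).const_mul 2
        exact this.mono_left nhdsWithin_le_nhds
      apply htt.congr'
      filter_upwards [self_mem_nhdsWithin] with τ hτ
      have hτ' : τ ≠ 0 := hτ
      rw [slope_def_field]
      simp only [hvmi]
      field_simp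
      ring
    have hder2 : deriv (deriv (fun t : ℝ => f (vp, vm + t • e))) 0 = 2 * (u 0 + lam) := hdd.deriv
    rw [hder2] at hsec
    have hu0 : u 0 = -(g e) := by
      rw [hu, hgdef]
      norm_num
    rw [hu0] at hsec
    linarith
  -- key pointwise facts
  have hxi : ∀ i, x i = vp i * vp i - vm i * vm i := by
    intro i; rw [hxdef]; simp
  have K1 : ∀ i, |g (Pi.single i 1)| ≤ lam := by
    intro i
    rcases eq_or_ne (vp i) 0 with hp | hp <;> rcases eq_or_ne (vm i) 0 with hm | hm
    · have := hsecp' i hp; have := hsecm' i hm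
      rw [abs_le]; constructor <;> linarith
    · have h1 := hstatm i
      have h2 : lam - g (Pi.single i 1) = 0 := by
        rcases mul_eq_zero.1 h1 with h' | h'
        · exact absurd h' hm
        · exact h'
      have := hsecp' i hp
      rw [abs_le]; constructor <;> linarith
    · have h1 := hstatp i
      have h2 : g (Pi.single i 1) + lam = 0 := by
        rcases mul_eq_zero.1 h1 with h' | h'
        · exact absurd h' hp
        · exact h'
      have := hsecm' i hm
      rw [abs_le]; constructor <;> linarith
    · have h1 := hstatp i
      have h2 : g (Pi.single i 1) + lam = 0 := by
        rcases mul_eq_zero.1 h1 with h' | h'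
        · exact absurd h' hp
        · exact h'
      have h3 := hstatm i
      have h4 : lam - g (Pi.single i 1) = 0 := by
        rcases mul_eq_zero.1 h3 with h' | h'
        · exact absurd h' hm
        · exact h'
      linarith
  have K2 : ∀ i, g (Pi.single i 1) * x i = -(lam * |x i|) := by
    intro i
    rcases eq_or_ne (vp i) 0 with hp | hp <;> rcases eq_or_ne (vm i) 0 with hm | hm
    · have hx0 : x i = 0 := by rw [hxi i, hp, hm]; ring
      rw [hx0]; simp
    · have h1 := hstatm i
      have h2 : g (Pi.single i 1) = lam := by
        rcases mul_eq_zero.1 h1 with h' | h'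
        · exact absurd h' hm
        · linarith
      have hxneg : x i ≤ 0 := by rw [hxi i, hp]; nlinarith [mul_self_nonneg (vm i)]
      rw [abs_of_nonpos hxneg, h2]; ring
    · have h1 := hstatp i
      have h2 : g (Pi.single i 1) = -lam := by
        rcases mul_eq_zero.1 h1 with h' | h'
        · exact absurd h' hp
        · linarith
      have hxpos : 0 ≤ x i := by rw [hxi i, hm]; nlinarith [mul_self_nonneg (vp i)]
      rw [abs_of_nonneg hxpos, h2]; ring
    · exfalso
      have h1 := hstatp i
      have h2 : g (Pi.single i 1) + lam = 0 := by
        rcases mul_eq_zero.1 h1 with h' | h'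
        · exact absurd h' hp
        · exact h'
      have h3 := hstatm i
      have h4 : lam - g (Pi.single i 1) = 0 := by
        rcases mul_eq_zero.1 h3 with h' | h'
        · exact absurd h' hm
        · exact h'
      linarith
  -- gradient inequality from convexity
  have hgrad : h x + g (y - x) ≤ h y := by
    set ψ : ℝ → ℝ := fun t => h (x + t • (y - x)) with hψdef
    have hconvψ : ConvexOn ℝ Set.univ ψ := by
      refine ⟨convex_univ, ?_⟩
      intro a _ b _ ca cb hca hcb hcab
      have hmem1 : x + a • (y - x) ∈ Set.univ := Set.mem_univ _
      have hmem2 : x + b • (y - x) ∈ Set.univ := Set.mem_univ _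
      have hc := hconv.2 hmem1 hmem2 hca hcb hcab
      have harg : ca • (x + a • (y - x)) + cb • (x + b • (y - x))
          = x + (ca * a + cb * b) • (y - x) := by
        have h1 : (ca + cb) • x = x := by rw [hcab, one_smul]
        calc ca • (x + a • (y - x)) + cb • (x + b • (y - x))
            = (ca + cb) • x + (ca * a + cb * b) • (y - x) := by module
          _ = x + (ca * a + cb * b) • (y - x) := by rw [h1]
      rw [harg] at hc
      simpa [hψdef, smul_eq_mul] using hc
    have hψ0 : HasDerivAt ψ (g (y - x)) 0 := by
      have := curve_hasDerivAt hC1 x (y - x) (hasDerivAt_id (0:ℝ))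
      simpa [hψdef, hgdef] using this
    have hsl := hconvψ.le_slope_of_hasDerivAt (Set.mem_univ (0:ℝ)) (Set.mem_univ (1:ℝ))
      zero_lt_one hψ0
    rw [slope_def_field] at hsl
    have hψ1 : ψ 1 = h y := by
      rw [hψdef]
      norm_num
    have hψz : ψ 0 = h x := by
      rw [hψdef]
      norm_num
    rw [hψ1, hψz] at hsl
    simp only [sub_zero, div_one] at hsl
    linarith
  -- expand g (y - x)
  have hexp : g (y - x) = ∑ i, (y i - x i) * g (Pi.single i 1) := by
    have hv : (y - x) = ∑ i, (y i - x i) • (Pi.single i 1 : Fin n → ℝ) := by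
      funext j
      rw [Finset.sum_apply]
      simp [Pi.single_apply, Finset.sum_ite_eq]
    rw [hv, map_sum]
    simp [smul_eq_mul]
  -- final assembly
  have key : ∀ i, lam * |x i| - lam * |y i| ≤ (y i - x i) * g (Pi.single i 1) := by
    intro i
    have h1 : -(lam * |y i|) ≤ y i * g (Pi.single i 1) := by
      nlinarith [K1 i, abs_nonneg (y i), neg_abs_le (y i * g (Pi.single i 1)),
        abs_mul (y i) (g (Pi.single i 1))]
    have h2 := K2 i
    nlinarith
  rw [hexp] at hgrad
  have hfin : lam * ∑ i, |x i| - lam * ∑ i, |y i| ≤ ∑ i, (y i - x i) * g (Pi.single i 1) := by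
    rw [Finset.mul_sum, Finset.mul_sum, ← Finset.sum_sub_distrib]
    exact Finset.sum_le_sum fun i _ => key i
  linarith
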